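/- For a prime p > 3 with p ≡ 2 (mod 3), in ℤ/(3p) the element p has exactly 2p − 2 nonzero elements y ≠ p with p·y nil clean, and likewise for 2p; i.e., deg(p) = deg(2p) = 2p − 2 in the nil clean divisor graph. -/
import Mathlib


def IsNilCleanElem {R : Type*} [CommRing R] (x : R) : Prop :=
  ∃ e n : R, IsIdempotentElem e ∧ IsNilpotent n ∧ x = e + n

def NCVertex {R : Type*} [CommRing R] (x : R) : Prop :=
  x ≠ 0 ∧ ∃ y : R, y ≠ 0 ∧ y ≠ x ∧ IsNilCleanElem (x * y)

def NCAdj {R : Type*} [CommRing R] (x y : R) : Prop :=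
  x ≠ y ∧ NCVertex x ∧ NCVertex y ∧ IsNilCleanElem (x * y)

private lemma count_mod3 (p r : ℕ) (hr : r < 3) :
    ((Finset.range (3*p)).filter (fun k => k % 3 = r)).card = p := by
  have himg : (Finset.range (3*p)).filter (fun k => k % 3 = r)
      = (Finset.range p).image (fun j => 3*j + r) := by
    ext k
    simp only [Finset.mem_filter, Finset.mem_range, Finset.mem_image]
    constructor
    · rintro ⟨h1, h2⟩; exact ⟨k / 3, by omega, by omega⟩
    · rintro ⟨j, hj, rfl⟩; omega
  rw [himg, Finset.card_image_of_injective _ (fun a b h => by omega), Finset.card_range]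

private lemma card_val_filter (n : ℕ) [NeZero n] (P : ℕ → Prop) [DecidablePred P] :
    (Finset.univ.filter (fun y : ZMod n => P y.val)).card
      = ((Finset.range n).filter P).card := by
  apply Finset.card_bij (fun y _ => y.val)
  · intro a ha
    simp only [Finset.mem_filter, Finset.mem_univ, true_and] at ha
    simp only [Finset.mem_filter, Finset.mem_range]
    exact ⟨ZMod.val_lt a, ha⟩
  · intro a _ b _ h
    exact ZMod.val_injective n h
  · intro b hb
    simp only [Finset.mem_filter, Finset.mem_range] at hb
    refine ⟨(b : ZMod n), ?_, ZMod.val_natCast_of_lt hb.1⟩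
    simp only [Finset.mem_filter, Finset.mem_univ, true_and]
    rw [ZMod.val_natCast_of_lt hb.1]
    exact hb.2

theorem stmt17 (p : ℕ) (hp : p.Prime) (hp3 : 3 < p) (hmod : p % 3 = 2) :
    Set.ncard {y : ZMod (3 * p) | y ≠ 0 ∧ y ≠ (p : ZMod (3 * p)) ∧
        IsNilCleanElem ((p : ZMod (3 * p)) * y)} = 2 * p - 2 ∧
    Set.ncard {y : ZMod (3 * p) | y ≠ 0 ∧ y ≠ 2 * (p : ZMod (3 * p)) ∧
        IsNilCleanElem (2 * (p : ZMod (3 * p)) * y)} = 2 * p - 2 := by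
  classical
  have hp0 : p ≠ 0 := by omega
  haveI : NeZero (3*p) := ⟨by omega⟩
  have hmodZ : (p : ℤ) % 3 = 2 := by omega
  obtain ⟨m, hm⟩ : ∃ m : ℤ, (p : ℤ) = 3*m + 2 := ⟨(p : ℤ)/3, by omega⟩
  -- squarefree
  have h3p : Nat.Prime 3 := by norm_num
  have hsq : Squarefree (3*p) := by
    refine (Nat.squarefree_mul ?_).mpr ⟨h3p.squarefree, hp.squarefree⟩
    exact (Nat.coprime_primes h3p hp).mpr (by omega)
  -- nilpotents are zero
  have hcastval : ∀ y : ZMod (3*p), ((y.val : ℕ) : ZMod (3*p)) = y := by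
    intro y; simp [ZMod.natCast_val, ZMod.cast_id]
  have hnil : ∀ n : ZMod (3*p), IsNilpotent n → n = 0 := by
    rintro n ⟨k, hk⟩
    rcases Nat.eq_zero_or_pos k with rfl | hk0
    · haveI : Fact (1 < 3*p) := ⟨by omega⟩
      simp at hk
    have h1 : ((n.val ^ k : ℕ) : ZMod (3*p)) = 0 := by
      push_cast
      rw [hcastval n, hk]
    have h2 : (3*p) ∣ n.val ^ k := (ZMod.natCast_eq_zero_iff _ _).mp h1
    have h3 : (3*p) ∣ n.val := hsq.isRadical k n.val h2
    have := ZMod.val_lt n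
    have hv0 : n.val = 0 := Nat.eq_zero_of_dvd_of_lt h3 (by omega)
    exact (ZMod.val_eq_zero n).mp hv0
  have hNC : ∀ x : ZMod (3*p), IsNilCleanElem x ↔ x * x = x := by
    intro x
    constructor
    · rintro ⟨e, n, he, hn, rfl⟩
      rw [hnil n hn, add_zero]
      exact he
    · intro h
      exact ⟨x, 0, h, IsNilpotent.zero, (add_zero x).symm⟩
  -- key divisibility characterization
  have key : ∀ a b : ℕ, ((a : ZMod (3*p)) = (b : ZMod (3*p))) ↔ (3*(p:ℤ)) ∣ (b:ℤ) - (a:ℤ) := by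
    intro a b
    rw [ZMod.natCast_eq_natCast_iff, Nat.modEq_iff_dvd]
    constructor <;> intro h <;> [skip; skip] <;> · push_cast at h ⊢; exact_mod_cast h
  -- reduction of products to val mod 3
  have hred : ∀ (c : ℕ), p ∣ c → ∀ y : ZMod (3*p),
      (c : ZMod (3*p)) * y = ((c * (y.val % 3) : ℕ) : ZMod (3*p)) := by
    intro c hc y
    obtain ⟨t, rfl⟩ := hc
    calc ((p*t : ℕ) : ZMod (3*p)) * y = ((p*t * y.val : ℕ) : ZMod (3*p)) := by
          push_cast [hcastval y]
          ring
      _ = _ := by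
          rw [ZMod.natCast_eq_natCast_iff]
          have h1 : y.val % 3 ≡ y.val [MOD 3] := Nat.mod_modEq _ _
          have h2 := (Nat.ModEq.mul_left' (c := p*t) h1.symm)
          have h3 : (3*p) ∣ (p*t*3) := ⟨t, by ring⟩
          exact h2.of_dvd h3
  -- nil-clean status of p*0, p*1, p*2, (2p)*1, (2p)*2
  have hNC0 : IsNilCleanElem (0 : ZMod (3*p)) :=
    ⟨0, 0, IsIdempotentElem.zero, IsNilpotent.zero, by simp⟩
  have hNCp : ¬ IsNilCleanElem ((p : ZMod (3*p))) := by
    rw [hNC]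
    rw [show ((p : ZMod (3*p))) = ((p : ℕ) : ZMod (3*p)) from rfl, ← Nat.cast_mul, key]
    rintro ⟨k, hk⟩
    have hpne : (p:ℤ) ≠ 0 := by omega
    have h2 : (p:ℤ) * (1 - p) = (p:ℤ) * (3*k) := by push_cast at hk; linear_combination hk
    have h3 := mul_left_cancel₀ hpne h2
    omega
  have hNC2p : IsNilCleanElem (((2*p : ℕ) : ZMod (3*p))) := by
    rw [hNC, ← Nat.cast_mul, key]
    exact ⟨-4*m - 2, by push_cast; linear_combination (-4*(p:ℤ)) * hm⟩
  have hNC4p : ¬ IsNilCleanElem (((2*p*2 : ℕ) : ZMod (3*p))) := by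
    rw [hNC, ← Nat.cast_mul, key]
    rintro ⟨k, hk⟩
    have hpne : (p:ℤ) ≠ 0 := by omega
    have h2 : (p:ℤ) * (4 - 16*p) = (p:ℤ) * (3*k) := by push_cast at hk; linear_combination hk
    have h3 := mul_left_cancel₀ hpne h2
    omega
  -- membership characterizations
  have hiff1 : ∀ y : ZMod (3*p),
      IsNilCleanElem ((p : ZMod (3*p)) * y) ↔ (y.val % 3 = 0 ∨ y.val % 3 = 2) := by
    intro y
    rw [hred p ⟨1, (mul_one p).symm⟩ y]
    rcases (show y.val % 3 = 0 ∨ y.val % 3 = 1 ∨ y.val % 3 = 2 by omega) with h | h | h <;> rw [h]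
    · exact iff_of_true (by rw [Nat.mul_zero, Nat.cast_zero]; exact hNC0) (Or.inl rfl)
    · exact iff_of_false (by rw [Nat.mul_one]; exact hNCp) (by omega)
    · exact iff_of_true (by rw [show p*2 = 2*p from by ring]; exact hNC2p) (Or.inr rfl)
  have hiff2 : ∀ y : ZMod (3*p),
      IsNilCleanElem (2 * (p : ZMod (3*p)) * y) ↔ (y.val % 3 = 0 ∨ y.val % 3 = 1) := by
    intro y
    have h2p : 2 * (p : ZMod (3*p)) = ((2*p : ℕ) : ZMod (3*p)) := by push_cast; ring
    rw [h2p, hred (2*p) ⟨2, by ring⟩ y]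
    rcases (show y.val % 3 = 0 ∨ y.val % 3 = 1 ∨ y.val % 3 = 2 by omega) with h | h | h <;> rw [h]
    · exact iff_of_true (by rw [Nat.mul_zero, Nat.cast_zero]; exact hNC0) (Or.inl rfl)
    · exact iff_of_true (by rw [Nat.mul_one]; exact hNC2p) (Or.inr rfl)
    · exact iff_of_false hNC4p (by omega)
  have hne0 : ∀ y : ZMod (3*p), y ≠ 0 ↔ y.val ≠ 0 :=
    fun y => (not_congr (ZMod.val_eq_zero y)).symm
  have hnecast : ∀ (y : ZMod (3*p)) (a : ℕ), a < 3*p →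
      (y ≠ ((a : ℕ) : ZMod (3*p)) ↔ y.val ≠ a) := by
    intro y a ha
    constructor
    · intro h h'
      exact h (by rw [← hcastval y, h'])
    · intro h h'
      exact h (by rw [h', ZMod.val_natCast_of_lt ha])
  constructor
  · -- first set
    have hset : {y : ZMod (3*p) | y ≠ 0 ∧ y ≠ (p : ZMod (3*p)) ∧
          IsNilCleanElem ((p : ZMod (3*p)) * y)}
        = ↑(Finset.univ.filter (fun y : ZMod (3*p) =>
            y.val ≠ 0 ∧ y.val ≠ p ∧ (y.val % 3 = 0 ∨ y.val % 3 = 2))) := by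
      ext y
      simp only [Set.mem_setOf_eq, Finset.coe_filter, Finset.mem_univ, true_and,
        Set.mem_setOf_eq]
      rw [hne0 y, hnecast y p (by omega), hiff1 y]
    rw [hset, Set.ncard_coe_finset,
      card_val_filter (3*p) (fun k => k ≠ 0 ∧ k ≠ p ∧ (k % 3 = 0 ∨ k % 3 = 2))]
    have hsplit : (Finset.range (3*p)).filter
          (fun k => k ≠ 0 ∧ k ≠ p ∧ (k % 3 = 0 ∨ k % 3 = 2))
        = ((Finset.range (3*p)).filter (fun k => k % 3 = 0)).erase 0
          ∪ ((Finset.range (3*p)).filter (fun k => k % 3 = 2)).erase p := by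
      ext k
      simp only [Finset.mem_filter, Finset.mem_range, Finset.mem_union, Finset.mem_erase]
      omega
    rw [hsplit, Finset.card_union_of_disjoint, Finset.card_erase_of_mem,
      Finset.card_erase_of_mem, count_mod3 p 0 (by omega), count_mod3 p 2 (by omega)]
    · omega
    · simp only [Finset.mem_filter, Finset.mem_range]; omega
    · simp only [Finset.mem_filter, Finset.mem_range]
      exact ⟨by omega, trivial⟩
    · rw [Finset.disjoint_left]
      intro a ha hb
      simp only [Finset.mem_erase, Finset.mem_filter, Finset.mem_range] at ha hb
      omega
  · -- second set
    have hset : {y : ZMod (3*p) | y ≠ 0 ∧ y ≠ 2 * (p : ZMod (3*p)) ∧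
          IsNilCleanElem (2 * (p : ZMod (3*p)) * y)}
        = ↑(Finset.univ.filter (fun y : ZMod (3*p) =>
            y.val ≠ 0 ∧ y.val ≠ 2*p ∧ (y.val % 3 = 0 ∨ y.val % 3 = 1))) := by
      ext y
      simp only [Set.mem_setOf_eq, Finset.coe_filter, Finset.mem_univ, true_and,
        Set.mem_setOf_eq]
      have h2p : 2 * (p : ZMod (3*p)) = ((2*p : ℕ) : ZMod (3*p)) := by push_cast; ring
      rw [hne0 y, hiff2 y, h2p, hnecast y (2*p) (by omega)]
    rw [hset, Set.ncard_coe_finset,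
      card_val_filter (3*p) (fun k => k ≠ 0 ∧ k ≠ 2*p ∧ (k % 3 = 0 ∨ k % 3 = 1))]
    have hsplit : (Finset.range (3*p)).filter
          (fun k => k ≠ 0 ∧ k ≠ 2*p ∧ (k % 3 = 0 ∨ k % 3 = 1))
        = ((Finset.range (3*p)).filter (fun k => k % 3 = 0)).erase 0
          ∪ ((Finset.range (3*p)).filter (fun k => k % 3 = 1)).erase (2*p) := by
      ext k
      simp only [Finset.mem_filter, Finset.mem_range, Finset.mem_union, Finset.mem_erase]
      omega
    rw [hsplit, Finset.card_union_of_disjoint, Finset.card_erase_of_mem,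
      Finset.card_erase_of_mem, count_mod3 p 0 (by omega), count_mod3 p 1 (by omega)]
    · omega
    · simp only [Finset.mem_filter, Finset.mem_range]; omega
    · simp only [Finset.mem_filter, Finset.mem_range]
      exact ⟨by omega, trivial⟩
    · rw [Finset.disjoint_left]
      intro a ha hb
      simp only [Finset.mem_erase, Finset.mem_filter, Finset.mem_range] at ha hb
      omega
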